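/- Let (E, ℰ) be a measurable space, μ a probability measure on E, and Q a Markov kernel from E to E such that the measure μ ⊗ Q on E × E is symmetric under the swap map (w, w') ↦ (w', w). Let h : E → ℝ be measurable with h > 0 everywhere and ∫ h dμ = 1, set π := μ.withDensity h, and define α(z, z') := min(h(z')/h(z), 1). Define the Metropolis–Hastings kernel K from E to E by K(z, A) := ∫ α(z, z') 1_A(z') Q(z, dz') + (1 − ∫ α(z, z') Q(z, dz')) · 1_A(z) for measurable A ⊆ E. Then π is a stationary distribution of K: the measure π.bind K (i.e. A ↦ ∫ K(z, A) π(dz)) equals π. -/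

import Mathlib

open MeasureTheory ProbabilityTheory
open scoped ENNReal

/-- Stationarity of the Metropolis–Hastings chain: with a swap-symmetric proposal joint measure
`μ ⊗ₘ Q`, target `π = μ.withDensity h` (`h > 0`, unit integral), acceptance probability
`α(z, z') = min(h z' / h z, 1)`, the Metropolis–Hastings kernel
`K(z, A) = ∫ α(z, z') 1_A(z') Q(z, dz') + (1 − ∫ α(z, z') Q(z, dz')) 1_A(z)`
has `π` as stationary distribution: `π.bind K = π`. -/
theorem metropolis_hastings_stationary
    {E : Type*} [MeasurableSpace E] (μ : Measure E) [IsProbabilityMeasure μ]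
    (Q : Kernel E E) [IsMarkovKernel Q]
    (hsym : (μ ⊗ₘ Q).map Prod.swap = μ ⊗ₘ Q)
    (h : E → ℝ) (hmeas : Measurable h) (hpos : ∀ z, 0 < h z)
    (hint : ∫ z, h z ∂μ = 1)
    (π : Measure E) (hπ : π = μ.withDensity fun z => ENNReal.ofReal (h z))
    (α : E → E → ℝ) (hα : α = fun z z' => min (h z' / h z) 1)
    (K : Kernel E E) [IsMarkovKernel K]
    (hK : ∀ z : E, ∀ A : Set E, MeasurableSet A →
      K z A = (∫⁻ z', ENNReal.ofReal (α z z') * A.indicator 1 z' ∂(Q z))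
        + (1 - ∫⁻ z', ENNReal.ofReal (α z z') ∂(Q z)) * A.indicator 1 z) :
    π.bind (fun z => K z) = π := by
  -- Notation
  set g : E → ℝ≥0∞ := fun z => ENNReal.ofReal (h z) with hg
  have hgm : Measurable g := hmeas.ennreal_ofReal
  have hgne : ∀ z, g z ≠ ∞ := fun z => ENNReal.ofReal_ne_top
  -- measurability of the (uncurried, `ofReal`) acceptance probability
  have hαm : Measurable (fun p : E × E => ENNReal.ofReal (α p.1 p.2)) := by
    subst hα
    exact (((hmeas.comp measurable_snd).div (hmeas.comp measurable_fst)).min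
      measurable_const).ennreal_ofReal
  -- the total acceptance probability
  set I : E → ℝ≥0∞ := fun z => ∫⁻ z', ENNReal.ofReal (α z z') ∂(Q z) with hIdef
  have hIm : Measurable I :=
    Measurable.lintegral_kernel_prod_right (f := fun z z' => ENNReal.ofReal (α z z')) hαm
  have hα_le_one : ∀ z z', ENNReal.ofReal (α z z') ≤ 1 := by
    intro z z'
    subst hα
    simpa using ENNReal.ofReal_le_one.2 (min_le_right _ 1)
  have hI_le_one : ∀ z, I z ≤ 1 := by
    intro z
    calc I z ≤ ∫⁻ _, 1 ∂(Q z) := lintegral_mono fun z' => hα_le_one z z'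
    _ = 1 := by simp
  have hαz : ∀ z, Measurable fun z' => ENNReal.ofReal (α z z') :=
    fun z => hαm.comp measurable_prodMk_left
  -- key symmetry of the joint flow density
  have key : ∀ z z', g z * ENNReal.ofReal (α z z') = g z' * ENNReal.ofReal (α z' z) := by
    intro z z'
    subst hα
    simp only [hg]
    rw [← ENNReal.ofReal_mul (hpos z).le, ← ENNReal.ofReal_mul (hpos z').le]
    congr 1
    rw [mul_min_of_nonneg _ _ (hpos z).le, mul_min_of_nonneg _ _ (hpos z').le,
      mul_div_cancel₀ _ (hpos z).ne', mul_div_cancel₀ _ (hpos z').ne']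
    simp only [mul_one]
    exact min_comm _ _
  -- swap invariance of lintegrals against μ ⊗ₘ Q
  have swap_int : ∀ F : E × E → ℝ≥0∞, Measurable F →
      ∫⁻ p, F p ∂(μ ⊗ₘ Q) = ∫⁻ p, F p.swap ∂(μ ⊗ₘ Q) := by
    intro F hF
    conv_lhs => rw [← hsym]
    rw [lintegral_map hF measurable_swap]
  refine Measure.ext fun A hA => ?_
  have hindm : Measurable (A.indicator (1 : E → ℝ≥0∞)) := measurable_one.indicator hA
  -- the acceptance-into-A integral
  set J : E → ℝ≥0∞ := fun z => ∫⁻ z', ENNReal.ofReal (α z z') * A.indicator 1 z' ∂(Q z)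
    with hJdef
  have hJm : Measurable J :=
    Measurable.lintegral_kernel_prod_right
      (f := fun z z' => ENNReal.ofReal (α z z') * A.indicator 1 z') <|
      hαm.mul (hindm.comp measurable_snd)
  have hbind : (π.bind fun z => K z) A = ∫⁻ z, (K z) A ∂π :=
    Measure.bind_apply hA (Kernel.measurable K).aemeasurable
  rw [hbind]
  have hKA : ∀ z, (K z) A = J z + (1 - I z) * A.indicator 1 z := fun z => hK z A hA
  simp only [hKA]
  rw [hπ, lintegral_withDensity_eq_lintegral_mul μ hgm
    (show Measurable (fun z => J z + (1 - I z) * A.indicator 1 z) from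
      (hJm.add ((measurable_const.sub hIm).mul hindm)))]
  simp only [Pi.mul_apply]
  have gsub : ∀ z, g z * (1 - I z) = g z - g z * I z := by
    intro z
    refine ENNReal.eq_sub_of_add_eq
      (ne_top_of_le_ne_top (hgne z) (mul_le_of_le_one_right' (hI_le_one z))) ?_
    rw [← mul_add, tsub_add_cancel_of_le (hI_le_one z), mul_one]
  have expand : ∀ z, g z * (J z + (1 - I z) * A.indicator 1 z)
      = g z * J z + A.indicator 1 z * (g z - g z * I z) := by
    intro z
    rw [mul_add, ← mul_assoc, gsub z, mul_comm (g z - g z * I z)]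
  simp only [expand]
  rw [lintegral_add_left (show Measurable (fun z => g z * J z) from hgm.mul hJm)]
  -- first term: use the symmetry
  have hFm : Measurable fun p : E × E =>
      g p.1 * ENNReal.ofReal (α p.1 p.2) * A.indicator 1 p.2 :=
    ((hgm.comp measurable_fst).mul hαm).mul (hindm.comp measurable_snd)
  have T1 : ∫⁻ z, g z * J z ∂μ = ∫⁻ z, A.indicator 1 z * (g z * I z) ∂μ := by
    have e1 : ∀ z, g z * J z
        = ∫⁻ z', g z * ENNReal.ofReal (α z z') * A.indicator 1 z' ∂(Q z) := by
      intro z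
      show g z * (∫⁻ z', ENNReal.ofReal (α z z') * A.indicator 1 z' ∂(Q z))
        = ∫⁻ z', g z * ENNReal.ofReal (α z z') * A.indicator 1 z' ∂(Q z)
      rw [← lintegral_const_mul (g z)
        (show Measurable (fun z' => ENNReal.ofReal (α z z') * A.indicator 1 z') from (hαz z).mul hindm)]
      exact lintegral_congr fun z' => (mul_assoc _ _ _).symm
    simp only [e1]
    rw [← Measure.lintegral_compProd hFm, swap_int _ hFm]
    have e2 : ∀ p : E × E, g p.2 * ENNReal.ofReal (α p.2 p.1) * A.indicator 1 p.1
        = A.indicator 1 p.1 * g p.1 * ENNReal.ofReal (α p.1 p.2) := by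
      intro p; rw [← key]; ring
    calc ∫⁻ p : E × E,
          (fun p : E × E => g p.1 * ENNReal.ofReal (α p.1 p.2) * A.indicator 1 p.2)
            p.swap ∂(μ ⊗ₘ Q)
        = ∫⁻ p : E × E, A.indicator 1 p.1 * g p.1 * ENNReal.ofReal (α p.1 p.2)
            ∂(μ ⊗ₘ Q) := by simp only [Prod.fst_swap, Prod.snd_swap, e2]
      _ = ∫⁻ z, ∫⁻ z', A.indicator 1 z * g z * ENNReal.ofReal (α z z') ∂(Q z) ∂μ :=
          Measure.lintegral_compProd
            (((hindm.comp measurable_fst).mul (hgm.comp measurable_fst)).mul hαm)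
      _ = ∫⁻ z, A.indicator 1 z * (g z * I z) ∂μ := by
          refine lintegral_congr fun z => ?_
          rw [lintegral_const_mul _ (hαz z), mul_assoc]
  rw [T1, ← lintegral_add_left
    (show Measurable (fun z => A.indicator 1 z * (g z * I z)) from hindm.mul (hgm.mul hIm))]
  have combine : ∀ z, A.indicator 1 z * (g z * I z) + A.indicator 1 z * (g z - g z * I z)
      = A.indicator g z := by
    intro z
    rw [← mul_add, add_tsub_cancel_of_le (mul_le_of_le_one_right' (hI_le_one z))]
    by_cases hz : z ∈ A <;> simp [Set.indicator_apply, hz]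
  simp only [combine]
  rw [lintegral_indicator hA, withDensity_apply _ hA]
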